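/- Let s ∈ (0,1), n ≥ 1, and let B₁ ⊂ ℝⁿ be the open unit ball. Suppose E^k (k ∈ ℕ) are admissible triples each of which is a minimizer of F^s in B₁, and suppose E^k → E in L¹_loc(ℝⁿ) for some admissible triple E. Then E is a minimizer of F^s in B₁ and lim_{k→∞} F^s(E^k, B₁) = F^s(E, B₁). (Compactness of the class of minimizers.) -/

import Mathlib

open MeasureTheory Filter ENNReal

/-- The nonlocal interaction `L^s(A,B) = ∫_A ∫_B |x-y|^{-(n+s)} dy dx ∈ [0,∞]`. -/
noncomputable def Ls (n : ℕ) (s : ℝ) (A B : Set (EuclideanSpace ℝ (Fin n))) : ℝ≥0∞ :=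
  ∫⁻ x in A, ∫⁻ y in B, ENNReal.ofReal (1 / ‖x - y‖ ^ ((n : ℝ) + s))

/-- The nonlocal area `Per^s_Ω(A,B)`. -/
noncomputable def nlArea (n : ℕ) (s : ℝ) (Ω A B : Set (EuclideanSpace ℝ (Fin n))) : ℝ≥0∞ :=
  Ls n s (A ∩ Ω) (B ∩ Ω) + Ls n s (A ∩ Ω) (B ∩ Ωᶜ) + Ls n s (A ∩ Ωᶜ) (B ∩ Ω)

/-- The fractional `s`-perimeter `Per^s_Ω(E) = Per^s_Ω(E, Eᶜ)`. -/
noncomputable def nlPer (n : ℕ) (s : ℝ) (Ω E : Set (EuclideanSpace ℝ (Fin n))) : ℝ≥0∞ :=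
  nlArea n s Ω E Eᶜ

/-- An admissible triple (3-part partition of `ℝⁿ` up to null sets);
`Em`, `E0`, `E1` stand for `E₋₁`, `E₀`, `E₁`. -/
def Admissible (n : ℕ) (Em E0 E1 : Set (EuclideanSpace ℝ (Fin n))) : Prop :=
  MeasurableSet Em ∧ MeasurableSet E0 ∧ MeasurableSet E1 ∧
  volume ((Em ∪ E0 ∪ E1)ᶜ) = 0 ∧
  volume (Em ∩ E0) = 0 ∧ volume (Em ∩ E1) = 0 ∧ volume (E0 ∩ E1) = 0

/-- The weighted nonlocal energy
`F^s(E,Ω) = σ_{-1,0} Per^s_Ω(E₋₁,E₀) + σ_{0,1} Per^s_Ω(E₀,E₁) + σ_{-1,1} Per^s_Ω(E₋₁,E₁)`. -/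
noncomputable def Fs (n : ℕ) (s σm0 σ01 σm1 : ℝ)
    (Ω Em E0 E1 : Set (EuclideanSpace ℝ (Fin n))) : ℝ≥0∞ :=
  ENNReal.ofReal σm0 * nlArea n s Ω Em E0 + ENNReal.ofReal σ01 * nlArea n s Ω E0 E1 +
    ENNReal.ofReal σm1 * nlArea n s Ω Em E1

/-- `E` is a minimizer of `F^s` in `Ω`: `F^s(E,Ω) ≤ F^s(Ẽ,Ω)` for every admissible `Ẽ`
agreeing with `E` outside `Ω` up to null sets. -/
def Minimizer (n : ℕ) (s σm0 σ01 σm1 : ℝ)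
    (Ω Em E0 E1 : Set (EuclideanSpace ℝ (Fin n))) : Prop :=
  Admissible n Em E0 E1 ∧
  ∀ Fm F0 F1 : Set (EuclideanSpace ℝ (Fin n)), Admissible n Fm F0 F1 →
    volume (symmDiff (Fm ∩ Ωᶜ) (Em ∩ Ωᶜ)) = 0 →
    volume (symmDiff (F0 ∩ Ωᶜ) (E0 ∩ Ωᶜ)) = 0 →
    volume (symmDiff (F1 ∩ Ωᶜ) (E1 ∩ Ωᶜ)) = 0 →
    Fs n s σm0 σ01 σm1 Ω Em E0 E1 ≤ Fs n s σm0 σ01 σm1 Ω Fm F0 F1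

/-- `χ_{E^k} → χ_E` in `L¹_loc(ℝⁿ)`. -/
def TendstoL1loc (n : ℕ) (Ek : ℕ → Set (EuclideanSpace ℝ (Fin n)))
    (E : Set (EuclideanSpace ℝ (Fin n))) : Prop :=
  ∀ K : Set (EuclideanSpace ℝ (Fin n)), IsCompact K →
    Tendsto (fun k => volume (symmDiff (Ek k) E ∩ K)) atTop (nhds 0)

section AuxLemmas
open Metric Set

open Metric Set

variable {n : ℕ} {s : ℝ}

/-- The integration kernel. -/
noncomputable def kerf (n : ℕ) (s : ℝ) (x y : EuclideanSpace ℝ (Fin n)) : ℝ≥0∞ :=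
  ENNReal.ofReal (1 / ‖x - y‖ ^ ((n : ℝ) + s))

lemma ker_symm (x y : EuclideanSpace ℝ (Fin n)) : kerf n s x y = kerf n s y x := by
  unfold kerf; rw [norm_sub_rev]

lemma ker_meas : Measurable (Function.uncurry (kerf n s)) := by
  unfold kerf Function.uncurry; fun_prop

lemma Ls_eq (A B : Set (EuclideanSpace ℝ (Fin n))) :
    Ls n s A B = ∫⁻ x in A, ∫⁻ y in B, kerf n s x y := rfl

lemma Ls_mono {A A' B B' : Set (EuclideanSpace ℝ (Fin n))} (hA : A ⊆ A') (hB : B ⊆ B') :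
    Ls n s A B ≤ Ls n s A' B' := by
  rw [Ls_eq, Ls_eq]
  exact le_trans (lintegral_mono fun x => lintegral_mono_set hB) (lintegral_mono_set hA)

lemma Ls_congr {A A' B B' : Set (EuclideanSpace ℝ (Fin n))}
    (hA : A =ᵐ[volume] A') (hB : B =ᵐ[volume] B') : Ls n s A B = Ls n s A' B' := by
  rw [Ls_eq, Ls_eq, Measure.restrict_congr_set hA]
  exact lintegral_congr fun x => by rw [Measure.restrict_congr_set hB]

lemma inner_meas (B : Set (EuclideanSpace ℝ (Fin n))) :
    Measurable (fun x => ∫⁻ y in B, kerf n s x y) :=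
  Measurable.lintegral_prod_right' ker_meas

lemma Ls_union_right (A B C : Set (EuclideanSpace ℝ (Fin n))) :
    Ls n s A (B ∪ C) ≤ Ls n s A B + Ls n s A C := by
  rw [Ls_eq, Ls_eq, Ls_eq]
  calc ∫⁻ x in A, ∫⁻ y in B ∪ C, kerf n s x y
      ≤ ∫⁻ x in A, ((∫⁻ y in B, kerf n s x y) + ∫⁻ y in C, kerf n s x y) :=
        lintegral_mono fun x => lintegral_union_le _ _ _
    _ = _ := lintegral_add_left (inner_meas B) _

lemma Ls_swap (A B : Set (EuclideanSpace ℝ (Fin n))) :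
    Ls n s A B = ∫⁻ y in B, ∫⁻ x in A, kerf n s x y := by
  rw [Ls_eq]; exact lintegral_lintegral_swap ker_meas.aemeasurable

/-- `H y = ∫_{B₁} |x-y|^{-n-s} dx`. -/
noncomputable def Hfun (n : ℕ) (s : ℝ) (y : EuclideanSpace ℝ (Fin n)) : ℝ≥0∞ :=
  ∫⁻ x in ball (0 : EuclideanSpace ℝ (Fin n)) 1, kerf n s x y

lemma Hfun_meas : Measurable (Hfun n s) :=
  Measurable.lintegral_prod_left' ker_meas

lemma int_H_eq (Z : Set (EuclideanSpace ℝ (Fin n))) :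
    ∫⁻ y in Z, Hfun n s y = Ls n s (ball (0 : EuclideanSpace ℝ (Fin n)) 1) Z :=
  (Ls_swap _ _).symm

lemma Ls_le_int_H {A Z : Set (EuclideanSpace ℝ (Fin n))}
    (hA : A ⊆ ball (0 : EuclideanSpace ℝ (Fin n)) 1) :
    Ls n s A Z ≤ ∫⁻ y in Z, Hfun n s y := by
  rw [int_H_eq]; exact Ls_mono hA subset_rfl

lemma Ls_le_int_H' {A Z : Set (EuclideanSpace ℝ (Fin n))}
    (hA : A ⊆ ball (0 : EuclideanSpace ℝ (Fin n)) 1) :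
    Ls n s Z A ≤ ∫⁻ y in Z, Hfun n s y := by
  rw [Ls_eq]
  refine lintegral_mono fun x => ?_
  calc ∫⁻ y in A, kerf n s x y ≤ ∫⁻ y in ball 0 1, kerf n s x y := lintegral_mono_set hA
    _ = Hfun n s x := lintegral_congr fun y => ker_symm x y

/-- liminf superadditivity in `ℝ≥0∞`. -/
lemma liminf_add_ge (u v : ℕ → ℝ≥0∞) :
    liminf u atTop + liminf v atTop ≤ liminf (fun k => u k + v k) atTop := by
  rw [liminf_eq_iSup_iInf_of_nat, liminf_eq_iSup_iInf_of_nat, liminf_eq_iSup_iInf_of_nat,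
    ENNReal.iSup_add]
  refine iSup_le fun a => ?_
  rw [ENNReal.add_iSup]
  refine iSup_le fun b => le_iSup_of_le (max a b) (le_iInf fun i => le_iInf fun hi => ?_)
  exact add_le_add (iInf₂_le i (le_trans (le_max_left a b) hi))
    (iInf₂_le i (le_trans (le_max_right a b) hi))

lemma liminf_const_mul_ge (c : ℝ≥0∞) (u : ℕ → ℝ≥0∞) :
    c * liminf u atTop ≤ liminf (fun k => c * u k) atTop := by
  rw [liminf_eq_iSup_iInf_of_nat, liminf_eq_iSup_iInf_of_nat, ENNReal.mul_iSup]
  exact iSup_mono fun m => le_iInf fun i => le_iInf fun hi =>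
    mul_le_mul_right (iInf₂_le i hi) c

lemma lintegral_Ioc_rpow {q T : ℝ} (hq : -1 < q) (hT : 0 < T) :
    ∫⁻ t in Ioc (0:ℝ) T, ENNReal.ofReal (t ^ q) = ENNReal.ofReal (T ^ (q+1) / (q+1)) := by
  have hq0 : (0:ℝ) < q + 1 := by linarith
  have hint : IntegrableOn (fun t : ℝ => t ^ q) (Ioc (0:ℝ) T) := by
    rw [← intervalIntegrable_iff_integrableOn_Ioc_of_le hT.le]
    exact intervalIntegral.intervalIntegrable_rpow' hq
  rw [← ofReal_integral_eq_lintegral_ofReal hint ?_]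
  · congr 1
    rw [← intervalIntegral.integral_of_le hT.le, integral_rpow (Or.inl hq),
      Real.zero_rpow hq0.ne', sub_zero]
  · filter_upwards [ae_restrict_mem measurableSet_Ioc] with t ht
    exact Real.rpow_nonneg ht.1.le q

lemma inner_bound (hs0 : 0 < s) {x : EuclideanSpace ℝ (Fin n)} (hx : ‖x‖ < 1) :
    ∫⁻ y in (ball (0 : EuclideanSpace ℝ (Fin n)) 1)ᶜ, kerf n s x y
      ≤ (volume (ball (0 : EuclideanSpace ℝ (Fin n)) 1) * ENNReal.ofReal (((n:ℝ)+s)/s))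
        * ENNReal.ofReal ((1 - ‖x‖) ^ (-s)) := by
  set p : ℝ := (n:ℝ) + s with hpdef
  have hp : 0 < p := by positivity
  set d : ℝ := 1 - ‖x‖ with hddef
  have hd : 0 < d := by simp [hddef]; linarith
  set f : EuclideanSpace ℝ (Fin n) → ℝ := fun y => 1 / ‖x - y‖ ^ p with hfdef
  have hfm : Measurable f := by unfold f; fun_prop
  have hnn : ∀ y, 0 ≤ f y := fun y =>
    one_div_nonneg.mpr (Real.rpow_nonneg (norm_nonneg _) _)
  set q : ℝ := -((n:ℝ)/p) with hqdef
  have hq : -1 < q := by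
    rw [hqdef, neg_lt, neg_neg, div_lt_one hp]
    simp [hpdef]; linarith
  set T : ℝ := d ^ (-p) with hTdef
  have hT : 0 < T := Real.rpow_pos_of_pos hd _
  have key : ∫⁻ y in (ball (0 : EuclideanSpace ℝ (Fin n)) 1)ᶜ, kerf n s x y
      = ∫⁻ t in Ioi (0:ℝ),
          (volume.restrict (ball (0 : EuclideanSpace ℝ (Fin n)) 1)ᶜ) {y | t < f y} :=
    lintegral_eq_lintegral_meas_lt _ (ae_of_all _ hnn) hfm.aemeasurable
  have hsub : ∀ t : ℝ, 0 < t →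
      {y : EuclideanSpace ℝ (Fin n) | t < f y} ⊆ closedBall x (t ^ (-(1/p))) := by
    intro t ht y hy
    simp only [mem_setOf_eq] at hy
    rcases eq_or_lt_of_le (norm_nonneg (x - y)) with h0 | h0
    · exfalso
      rw [hfdef] at hy
      simp only [← h0, Real.zero_rpow hp.ne', div_zero] at hy
      linarith
    have h2 : t < (‖x - y‖ ^ p)⁻¹ := by simpa [hfdef, one_div] using hy
    have h1 : ‖x - y‖ ^ p < t⁻¹ := by
      have := inv_strictAnti₀ ht h2
      rwa [inv_inv] at this
    have h4 := Real.rpow_le_rpow (Real.rpow_nonneg (norm_nonneg _) p) h1.le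
      (one_div_pos.mpr hp).le
    rw [← Real.rpow_mul (norm_nonneg _), mul_one_div_cancel hp.ne', Real.rpow_one] at h4
    have h5 : ‖x - y‖ ≤ t ^ (-(1/p)) := by
      calc ‖x - y‖ ≤ (t⁻¹) ^ (1/p) := h4
        _ = t ^ (-(1/p)) := by
            rw [Real.inv_rpow ht.le, ← Real.rpow_neg ht.le]
    rw [mem_closedBall, dist_eq_norm, norm_sub_rev]
    exact h5
  have hempty : ∀ t : ℝ, T < t →
      {y : EuclideanSpace ℝ (Fin n) | t < f y} ∩ (ball (0:EuclideanSpace ℝ (Fin n)) 1)ᶜ = ∅ := by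
    intro t htT
    rw [eq_empty_iff_forall_notMem]
    rintro y ⟨hy1, hy2⟩
    have ht : 0 < t := lt_trans hT htT
    have hyb := hsub t ht hy1
    have hrad : t ^ (-(1/p)) < d := by
      have h6 := Real.rpow_lt_rpow_of_neg hT htT (neg_lt_zero.mpr (one_div_pos.mpr hp))
      rwa [hTdef, ← Real.rpow_mul hd.le, neg_mul_neg, mul_one_div_cancel hp.ne',
        Real.rpow_one] at h6
    apply hy2
    have h5 : dist y x ≤ t ^ (-(1/p)) := mem_closedBall.mp hyb
    have : dist y 0 < 1 := by
      calc dist y 0 ≤ dist y x + dist x 0 := dist_triangle y x 0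
        _ ≤ t ^ (-(1/p)) + ‖x‖ := add_le_add h5 (by rw [dist_zero_right])
        _ < d + ‖x‖ := by linarith
        _ = 1 := by rw [hddef]; ring
    exact mem_ball.mpr this
  rw [key]
  have hsplit : Ioc (0:ℝ) T ∪ Ioi T = Ioi 0 := Ioc_union_Ioi_eq_Ioi hT.le
  calc ∫⁻ t in Ioi (0:ℝ), (volume.restrict (ball (0:EuclideanSpace ℝ (Fin n)) 1)ᶜ) {y | t < f y}
      = ∫⁻ t in Ioc (0:ℝ) T ∪ Ioi T,
          (volume.restrict (ball (0:EuclideanSpace ℝ (Fin n)) 1)ᶜ) {y | t < f y} := by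
        rw [hsplit]
    _ ≤ (∫⁻ t in Ioc (0:ℝ) T,
          (volume.restrict (ball (0:EuclideanSpace ℝ (Fin n)) 1)ᶜ) {y | t < f y})
        + ∫⁻ t in Ioi T,
          (volume.restrict (ball (0:EuclideanSpace ℝ (Fin n)) 1)ᶜ) {y | t < f y} :=
        lintegral_union_le _ _ _
    _ = ∫⁻ t in Ioc (0:ℝ) T,
          (volume.restrict (ball (0:EuclideanSpace ℝ (Fin n)) 1)ᶜ) {y | t < f y} := by
        have hzero : ∀ t ∈ Ioi T,
            (volume.restrict (ball (0:EuclideanSpace ℝ (Fin n)) 1)ᶜ) {y | t < f y} = 0 := by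
          intro t ht
          rw [Measure.restrict_apply (measurableSet_lt measurable_const hfm),
            hempty t ht, measure_empty]
        rw [setLIntegral_congr_fun measurableSet_Ioi hzero, lintegral_zero,
          add_zero]
    _ ≤ ∫⁻ t in Ioc (0:ℝ) T, ENNReal.ofReal (t ^ q)
          * volume (ball (0:EuclideanSpace ℝ (Fin n)) 1) := by
        refine setLIntegral_mono (by fun_prop) ?_
        intro t ht
        calc (volume.restrict (ball (0:EuclideanSpace ℝ (Fin n)) 1)ᶜ) {y | t < f y}
            = volume ({y : EuclideanSpace ℝ (Fin n) | t < f y}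
                ∩ (ball (0:EuclideanSpace ℝ (Fin n)) 1)ᶜ) :=
              Measure.restrict_apply (measurableSet_lt measurable_const hfm)
          _ ≤ volume (closedBall x (t ^ (-(1/p)))) :=
              measure_mono (inter_subset_left.trans (hsub t ht.1))
          _ = ENNReal.ofReal ((t ^ (-(1/p))) ^ Module.finrank ℝ (EuclideanSpace ℝ (Fin n)))
                * volume (ball (0:EuclideanSpace ℝ (Fin n)) 1) :=
              Measure.addHaar_closedBall volume x (Real.rpow_nonneg ht.1.le _)
          _ = ENNReal.ofReal (t ^ q) * volume (ball (0:EuclideanSpace ℝ (Fin n)) 1) := by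
              congr 2
              rw [finrank_euclideanSpace_fin, ← Real.rpow_natCast (t ^ (-(1/p))) n,
                ← Real.rpow_mul ht.1.le]
              congr 1
              rw [hqdef]; ring
    _ = ENNReal.ofReal (T ^ (q+1) / (q+1)) * volume (ball (0:EuclideanSpace ℝ (Fin n)) 1) := by
        rw [lintegral_mul_const _ (by fun_prop), lintegral_Ioc_rpow hq hT]
    _ = (volume (ball (0 : EuclideanSpace ℝ (Fin n)) 1) * ENNReal.ofReal (((n:ℝ)+s)/s))
        * ENNReal.ofReal ((1 - ‖x‖) ^ (-s)) := by
        have e1 : q + 1 = s / p := by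
          rw [hqdef]; field_simp; linarith [hpdef]
        have e2 : T ^ (q+1) = d ^ (-s) := by
          rw [e1, hTdef, ← Real.rpow_mul hd.le]
          congr 1
          field_simp
        have e3 : T ^ (q+1) / (q+1) = d ^ (-s) * (p/s) := by
          rw [e2, e1, div_div_eq_mul_div, mul_div_assoc]
        rw [e3, ENNReal.ofReal_mul (Real.rpow_nonneg hd.le _)]
        rw [hddef, hpdef]
        ring

lemma J_fin (hn : 1 ≤ n) (hs : s ∈ Set.Ioo (0:ℝ) 1) :
    ∫⁻ x in ball (0 : EuclideanSpace ℝ (Fin n)) 1, ENNReal.ofReal ((1 - ‖x‖) ^ (-s)) ≠ ⊤ := by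
  haveI : Nontrivial (EuclideanSpace ℝ (Fin n)) :=
    ⟨⟨0, EuclideanSpace.single ⟨0, hn⟩ (1:ℝ), fun h => by
      simpa [EuclideanSpace.single_apply] using congrArg (fun v => v ⟨0, hn⟩) h⟩⟩
  obtain ⟨hs0, hs1⟩ := hs
  set g : EuclideanSpace ℝ (Fin n) → ℝ := fun x => (1 - ‖x‖) ^ (-s) with hgdef
  have hgm : Measurable g := by unfold g; fun_prop
  have hnn : 0 ≤ᵐ[volume.restrict (ball (0 : EuclideanSpace ℝ (Fin n)) 1)] g := by
    filter_upwards [ae_restrict_mem measurableSet_ball] with x hx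
    have : ‖x‖ < 1 := mem_ball_zero_iff.mp hx
    exact Real.rpow_nonneg (by linarith) _
  rw [lintegral_eq_lintegral_meas_lt _ hnn hgm.aemeasurable]
  set vB := volume (ball (0 : EuclideanSpace ℝ (Fin n)) 1) with hvB
  have hvBfin : vB ≠ ⊤ := measure_ball_lt_top.ne
  -- pointwise bounds on the measure of superlevel sets
  have hb1 : ∀ t : ℝ, (volume.restrict (ball (0 : EuclideanSpace ℝ (Fin n)) 1)) {x | t < g x}
      ≤ vB := by
    intro t
    rw [Measure.restrict_apply (measurableSet_lt measurable_const hgm)]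
    exact measure_mono inter_subset_right
  have hb2 : ∀ t : ℝ, 1 < t →
      (volume.restrict (ball (0 : EuclideanSpace ℝ (Fin n)) 1)) {x | t < g x}
        ≤ ENNReal.ofReal ((n:ℝ) * t ^ (-(1/s))) * vB := by
    intro t ht
    have ht0 : (0:ℝ) < t := lt_trans zero_lt_one ht
    set u : ℝ := t ^ (-(1/s)) with hudef
    have hu0 : 0 < u := Real.rpow_pos_of_pos ht0 _
    have hu1 : u < 1 :=
      Real.rpow_lt_one_of_one_lt_of_neg ht (neg_lt_zero.mpr (one_div_pos.mpr hs0))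
    have hsubset : {x : EuclideanSpace ℝ (Fin n) | t < g x}
        ∩ ball (0 : EuclideanSpace ℝ (Fin n)) 1
        ⊆ closedBall (0 : EuclideanSpace ℝ (Fin n)) 1
          \ ball (0 : EuclideanSpace ℝ (Fin n)) (1 - u) := by
      rintro x ⟨hx1, hx2⟩
      have hxn : ‖x‖ < 1 := mem_ball_zero_iff.mp hx2
      set a : ℝ := 1 - ‖x‖ with hadef
      have ha0 : 0 < a := by simp [hadef]; linarith
      simp only [mem_setOf_eq, hgdef] at hx1
      -- from t < a ^ (-s) deduce a ≤ u
      have h2 : t < (a ^ s)⁻¹ := by rwa [Real.rpow_neg ha0.le] at hx1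
      have h1 : a ^ s < t⁻¹ := by
        have := inv_strictAnti₀ ht0 h2
        rwa [inv_inv] at this
      have h4 := Real.rpow_le_rpow (Real.rpow_nonneg ha0.le s) h1.le
        (one_div_pos.mpr hs0).le
      rw [← Real.rpow_mul ha0.le, mul_one_div_cancel hs0.ne', Real.rpow_one] at h4
      have hau : a ≤ u := by
        calc a ≤ (t⁻¹) ^ (1/s) := h4
          _ = u := by rw [hudef, Real.inv_rpow ht0.le, ← Real.rpow_neg ht0.le]
      constructor
      · exact mem_closedBall_zero_iff.mpr hxn.le
      · intro hmem
        have : ‖x‖ < 1 - u := mem_ball_zero_iff.mp hmem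
        have : a > u := by simp only [hadef]; linarith
        linarith
    rw [Measure.restrict_apply (measurableSet_lt measurable_const hgm)]
    calc volume ({x : EuclideanSpace ℝ (Fin n) | t < g x}
          ∩ ball (0 : EuclideanSpace ℝ (Fin n)) 1)
        ≤ volume (closedBall (0 : EuclideanSpace ℝ (Fin n)) 1
            \ ball (0 : EuclideanSpace ℝ (Fin n)) (1 - u)) := measure_mono hsubset
      _ ≤ ENNReal.ofReal ((n:ℝ) * u) * vB := by
          rw [measure_diff
            (ball_subset_closedBall.trans (closedBall_subset_closedBall (by linarith)))
            measurableSet_ball.nullMeasurableSet measure_ball_lt_top.ne]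
          rw [Measure.addHaar_closedBall volume _ zero_le_one,
            Measure.addHaar_ball volume _ (by linarith : (0:ℝ) ≤ 1 - u),
            finrank_euclideanSpace_fin]
          rw [tsub_le_iff_right, ← add_mul, ← ENNReal.ofReal_add
            (mul_nonneg (Nat.cast_nonneg n) hu0.le) (pow_nonneg (by linarith) n)]
          refine mul_le_mul_left (ENNReal.ofReal_le_ofReal ?_) _
          have hbern : 1 + (n:ℝ) * (-u) ≤ (1 + (-u)) ^ n :=
            one_add_mul_le_pow (by linarith) n
          have : (1:ℝ) - (n:ℝ)*u ≤ (1-u)^n := by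
            simpa [sub_eq_add_neg, mul_neg] using hbern
          rw [one_pow]
          linarith
  -- split the t-integral at 1
  have hsplit : Ioc (0:ℝ) 1 ∪ Ioi 1 = Ioi 0 := Ioc_union_Ioi_eq_Ioi zero_le_one
  have h1 : (∫⁻ t in Ioc (0:ℝ) 1,
      (volume.restrict (ball (0 : EuclideanSpace ℝ (Fin n)) 1)) {x | t < g x}) < ⊤ := by
    refine lt_of_le_of_lt (setLIntegral_mono measurable_const (fun t _ => hb1 t)) ?_
    rw [setLIntegral_const]
    exact ENNReal.mul_lt_top hvBfin.lt_top (by rw [Real.volume_Ioc]; exact ofReal_lt_top)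
  have h2 : (∫⁻ t in Ioi (1:ℝ),
      (volume.restrict (ball (0 : EuclideanSpace ℝ (Fin n)) 1)) {x | t < g x}) < ⊤ := by
    refine lt_of_le_of_lt (setLIntegral_mono (by fun_prop) (fun t ht => hb2 t ht)) ?_
    rw [lintegral_mul_const _ (by fun_prop)]
    refine ENNReal.mul_lt_top ?_ hvBfin.lt_top
    have hexp : -(1/s) < -1 := by
      have : 1 < 1/s := by rw [lt_div_iff₀ hs0, one_mul]; exact hs1
      linarith
    have hint : IntegrableOn (fun t : ℝ => (n:ℝ) * t ^ (-(1/s))) (Ioi (1:ℝ)) volume :=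
      (integrableOn_Ioi_rpow_of_lt hexp zero_lt_one).const_mul _
    exact lt_of_le_of_lt (lintegral_ofReal_le_lintegral_enorm _) hint.hasFiniteIntegral
  refine ne_of_lt (lt_of_le_of_lt ?_ (ENNReal.add_lt_top.mpr ⟨h1, h2⟩))
  rw [← hsplit]
  exact lintegral_union_le _ _ _

lemma Ls_ball_compl_fin (hn : 1 ≤ n) (hs : s ∈ Set.Ioo (0:ℝ) 1) :
    Ls n s (ball (0 : EuclideanSpace ℝ (Fin n)) 1)
      (ball (0 : EuclideanSpace ℝ (Fin n)) 1)ᶜ ≠ ⊤ := by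
  rw [Ls_eq]
  have hCfin : volume (ball (0 : EuclideanSpace ℝ (Fin n)) 1)
      * ENNReal.ofReal (((n:ℝ)+s)/s) ≠ ⊤ :=
    ENNReal.mul_ne_top measure_ball_lt_top.ne ofReal_ne_top
  refine ne_of_lt (lt_of_le_of_lt (setLIntegral_mono (by fun_prop)
    (fun x hx => inner_bound hs.1 (mem_ball_zero_iff.mp hx))) ?_)
  rw [lintegral_const_mul' _ _ hCfin]
  exact ENNReal.mul_lt_top hCfin.lt_top (J_fin hn hs).lt_top

lemma H_fin (hn : 1 ≤ n) (hs : s ∈ Set.Ioo (0:ℝ) 1) :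
    ∫⁻ y in (ball (0 : EuclideanSpace ℝ (Fin n)) 1)ᶜ, Hfun n s y ≠ ⊤ := by
  rw [int_H_eq]; exact Ls_ball_compl_fin hn hs

lemma err_tendsto (hn : 1 ≤ n) (hs : s ∈ Set.Ioo (0:ℝ) 1)
    (Z : ℕ → Set (EuclideanSpace ℝ (Fin n)))
    (hZm : ∀ k, MeasurableSet (Z k))
    (hZ : ∀ k, Z k ⊆ (ball (0 : EuclideanSpace ℝ (Fin n)) 1)ᶜ)
    (hc : ∀ R : ℝ, Tendsto (fun k => volume (Z k ∩ closedBall (0:EuclideanSpace ℝ (Fin n)) R))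
      atTop (nhds 0)) :
    Tendsto (fun k => ∫⁻ y in Z k, Hfun n s y) atTop (nhds 0) := by
  rw [ENNReal.tendsto_nhds_zero]
  intro ε hε
  set Bc := (ball (0 : EuclideanSpace ℝ (Fin n)) 1)ᶜ with hBc
  have Htot : ∫⁻ y, Hfun n s y ∂(volume.restrict Bc) ≠ ⊤ := H_fin hn hs
  set ν : Measure (EuclideanSpace ℝ (Fin n)) :=
    (volume.restrict Bc).withDensity (Hfun n s) with hν
  have hνapp : ∀ A : Set (EuclideanSpace ℝ (Fin n)), MeasurableSet A →
      ν A = ∫⁻ y in A, Hfun n s y ∂(volume.restrict Bc) :=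
    fun A hA => withDensity_apply _ hA
  have hνfin : ν Set.univ ≠ ⊤ := by
    rw [hνapp _ MeasurableSet.univ, Measure.restrict_univ]; exact Htot
  have htail : Tendsto (fun m : ℕ => ν ((closedBall (0:EuclideanSpace ℝ (Fin n)) m)ᶜ)) atTop
      (nhds (ν (⋂ m : ℕ, (closedBall (0:EuclideanSpace ℝ (Fin n)) m)ᶜ))) := by
    refine tendsto_measure_iInter_atTop
      (fun m => measurableSet_closedBall.compl.nullMeasurableSet) ?_ ⟨0, ?_⟩
    · intro i j hij
      exact compl_subset_compl.mpr (closedBall_subset_closedBall (by exact_mod_cast hij))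
    · exact ne_top_of_le_ne_top hνfin (measure_mono (subset_univ _))
  have hIempty : (⋂ m : ℕ, (closedBall (0:EuclideanSpace ℝ (Fin n)) m)ᶜ)
      = (∅ : Set (EuclideanSpace ℝ (Fin n))) := by
    rw [eq_empty_iff_forall_notMem]
    intro x hx
    obtain ⟨m, hm⟩ := exists_nat_ge ‖x‖
    exact (Set.mem_iInter.mp hx m) (mem_closedBall_zero_iff.mpr hm)
  rw [hIempty, measure_empty] at htail
  have hε2 : (0:ℝ≥0∞) < ε/2 := ENNReal.half_pos hε.ne'
  obtain ⟨m₀, hm₀⟩ := (htail.eventually_lt_const hε2).exists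
  obtain ⟨δ, hδ0, hδ⟩ := exists_pos_setLIntegral_lt_of_measure_lt Htot hε2.ne'
  filter_upwards [(hc m₀).eventually_lt_const hδ0] with k hk
  have piece1 : ∫⁻ y in Z k ∩ closedBall (0:EuclideanSpace ℝ (Fin n)) m₀, Hfun n s y ≤ ε/2 := by
    have hsub : Z k ∩ closedBall (0:EuclideanSpace ℝ (Fin n)) m₀ ⊆ Bc :=
      inter_subset_left.trans (hZ k)
    have heq : ∫⁻ y in Z k ∩ closedBall (0:EuclideanSpace ℝ (Fin n)) m₀, Hfun n s y
        = ∫⁻ y in Z k ∩ closedBall (0:EuclideanSpace ℝ (Fin n)) m₀, Hfun n s y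
            ∂(volume.restrict Bc) := by
      rw [Measure.restrict_restrict ((hZm k).inter measurableSet_closedBall),
        inter_eq_self_of_subset_left hsub]
    rw [heq]
    refine (hδ _ ?_).le
    refine lt_of_le_of_lt ?_ hk
    rw [Measure.restrict_apply ((hZm k).inter measurableSet_closedBall)]
    exact measure_mono inter_subset_left
  have piece2 : ∫⁻ y in (closedBall (0:EuclideanSpace ℝ (Fin n)) m₀)ᶜ ∩ Bc, Hfun n s y ≤ ε/2 := by
    have heq : ν ((closedBall (0:EuclideanSpace ℝ (Fin n)) m₀)ᶜ)
        = ∫⁻ y in (closedBall (0:EuclideanSpace ℝ (Fin n)) m₀)ᶜ ∩ Bc, Hfun n s y := by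
      rw [hνapp _ measurableSet_closedBall.compl,
        Measure.restrict_restrict measurableSet_closedBall.compl]
    rw [← heq]
    exact hm₀.le
  have hsplitset : Z k ⊆ (Z k ∩ closedBall (0:EuclideanSpace ℝ (Fin n)) m₀)
      ∪ ((closedBall (0:EuclideanSpace ℝ (Fin n)) m₀)ᶜ ∩ Bc) := by
    intro y hy
    by_cases hyc : y ∈ closedBall (0:EuclideanSpace ℝ (Fin n)) m₀
    · exact Or.inl ⟨hy, hyc⟩
    · exact Or.inr ⟨hyc, hZ k hy⟩
  calc ∫⁻ y in Z k, Hfun n s y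
      ≤ ∫⁻ y in (Z k ∩ closedBall (0:EuclideanSpace ℝ (Fin n)) m₀)
          ∪ ((closedBall (0:EuclideanSpace ℝ (Fin n)) m₀)ᶜ ∩ Bc), Hfun n s y :=
        lintegral_mono_set hsplitset
    _ ≤ (∫⁻ y in Z k ∩ closedBall (0:EuclideanSpace ℝ (Fin n)) m₀, Hfun n s y)
        + ∫⁻ y in (closedBall (0:EuclideanSpace ℝ (Fin n)) m₀)ᶜ ∩ Bc, Hfun n s y :=
        lintegral_union_le _ _ _
    _ ≤ ε/2 + ε/2 := add_le_add piece1 piece2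
    _ = ε := ENNReal.add_halves ε

lemma Ls_prod {A B : Set (EuclideanSpace ℝ (Fin n))}
    (hA : MeasurableSet A) (hB : MeasurableSet B) :
    Ls n s A B = ∫⁻ p, (A ×ˢ B).indicator (Function.uncurry (kerf n s)) p
      ∂((volume : Measure (EuclideanSpace ℝ (Fin n))).prod volume) := by
  rw [Ls_eq, lintegral_lintegral ker_meas.aemeasurable, Measure.prod_restrict,
    ← lintegral_indicator (hA.prod hB)]
  rfl

lemma Ls_le_liminf {A B : Set (EuclideanSpace ℝ (Fin n))} {Ak Bk : ℕ → Set (EuclideanSpace ℝ (Fin n))}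
    (hA : MeasurableSet A) (hB : MeasurableSet B)
    (hAk : ∀ k, MeasurableSet (Ak k)) (hBk : ∀ k, MeasurableSet (Bk k))
    (haeA : ∀ᵐ x ∂(volume : Measure (EuclideanSpace ℝ (Fin n))),
      ∀ᶠ k in atTop, (x ∈ Ak k ↔ x ∈ A))
    (haeB : ∀ᵐ y ∂(volume : Measure (EuclideanSpace ℝ (Fin n))),
      ∀ᶠ k in atTop, (y ∈ Bk k ↔ y ∈ B)) :
    Ls n s A B ≤ liminf (fun k => Ls n s (Ak k) (Bk k)) atTop := by
  have hmk : ∀ k, Measurable ((Ak k ×ˢ Bk k).indicator (Function.uncurry (kerf n s))) :=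
    fun k => ker_meas.indicator ((hAk k).prod (hBk k))
  have haeP : ∀ᵐ p ∂((volume : Measure (EuclideanSpace ℝ (Fin n))).prod volume),
      (∀ᶠ k in atTop, (p.1 ∈ Ak k ↔ p.1 ∈ A)) ∧ (∀ᶠ k in atTop, (p.2 ∈ Bk k ↔ p.2 ∈ B)) := by
    rw [ae_iff]
    set NA := {x : EuclideanSpace ℝ (Fin n) | ¬ ∀ᶠ k in atTop, (x ∈ Ak k ↔ x ∈ A)} with hNA
    set NB := {y : EuclideanSpace ℝ (Fin n) | ¬ ∀ᶠ k in atTop, (y ∈ Bk k ↔ y ∈ B)} with hNB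
    have hUnull : ((volume : Measure (EuclideanSpace ℝ (Fin n))).prod volume)
        ((NA ×ˢ (Set.univ : Set (EuclideanSpace ℝ (Fin n))))
          ∪ ((Set.univ : Set (EuclideanSpace ℝ (Fin n))) ×ˢ NB)) = 0 := by
      refine measure_union_null ?_ ?_
      · rw [Measure.prod_prod, ae_iff.mp haeA, zero_mul]
      · rw [Measure.prod_prod, ae_iff.mp haeB, mul_zero]
    refine measure_mono_null (fun p hp => ?_) hUnull
    simp only [Set.mem_setOf_eq, not_and_or] at hp
    rcases hp with hp | hp
    · exact Or.inl (Set.mk_mem_prod hp (Set.mem_univ _))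
    · exact Or.inr (Set.mk_mem_prod (Set.mem_univ _) hp)
  have haelim : ∀ᵐ p ∂((volume : Measure (EuclideanSpace ℝ (Fin n))).prod volume),
      (A ×ˢ B).indicator (Function.uncurry (kerf n s)) p
        ≤ liminf (fun k => (Ak k ×ˢ Bk k).indicator (Function.uncurry (kerf n s)) p) atTop := by
    filter_upwards [haeP] with p hp
    refine le_liminf_of_le (by isBoundedDefault) ?_
    filter_upwards [hp.1, hp.2] with k h1 h2
    have hiff : p ∈ (Ak k ×ˢ Bk k) ↔ p ∈ A ×ˢ B := by
      simp only [Set.mem_prod, h1, h2]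
    by_cases h : p ∈ A ×ˢ B
    · rw [Set.indicator_of_mem h, Set.indicator_of_mem (hiff.mpr h)]
    · rw [Set.indicator_of_notMem h, Set.indicator_of_notMem (fun c => h (hiff.mp c))]
  calc Ls n s A B
      = ∫⁻ p, (A ×ˢ B).indicator (Function.uncurry (kerf n s)) p
          ∂((volume : Measure (EuclideanSpace ℝ (Fin n))).prod volume) := Ls_prod hA hB
    _ ≤ ∫⁻ p, liminf (fun k => (Ak k ×ˢ Bk k).indicator (Function.uncurry (kerf n s)) p) atTop
          ∂((volume : Measure (EuclideanSpace ℝ (Fin n))).prod volume) :=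
        lintegral_mono_ae haelim
    _ ≤ liminf (fun k => ∫⁻ p, (Ak k ×ˢ Bk k).indicator (Function.uncurry (kerf n s)) p
          ∂((volume : Measure (EuclideanSpace ℝ (Fin n))).prod volume)) atTop :=
        lintegral_liminf_le hmk
    _ = liminf (fun k => Ls n s (Ak k) (Bk k)) atTop := by
        congr 1
        exact funext fun k => (Ls_prod (hAk k) (hBk k)).symm

lemma exists_subseq_ae
    (A B C : ℕ → Set (EuclideanSpace ℝ (Fin n))) (SA SB SC : Set (EuclideanSpace ℝ (Fin n)))
    (hA : ∀ m : ℕ, Tendsto (fun k =>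
      volume (symmDiff (A k) SA ∩ closedBall (0:EuclideanSpace ℝ (Fin n)) m)) atTop (nhds 0))
    (hB : ∀ m : ℕ, Tendsto (fun k =>
      volume (symmDiff (B k) SB ∩ closedBall (0:EuclideanSpace ℝ (Fin n)) m)) atTop (nhds 0))
    (hC : ∀ m : ℕ, Tendsto (fun k =>
      volume (symmDiff (C k) SC ∩ closedBall (0:EuclideanSpace ℝ (Fin n)) m)) atTop (nhds 0)) :
    ∃ ψ : ℕ → ℕ, StrictMono ψ ∧
      ∀ᵐ x ∂(volume : Measure (EuclideanSpace ℝ (Fin n))),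
        (∀ᶠ k in atTop, (x ∈ A (ψ k) ↔ x ∈ SA)) ∧ (∀ᶠ k in atTop, (x ∈ B (ψ k) ↔ x ∈ SB)) ∧
        (∀ᶠ k in atTop, (x ∈ C (ψ k) ↔ x ∈ SC)) := by
  have hpos : ∀ m : ℕ, (0:ℝ≥0∞) < (2:ℝ≥0∞)⁻¹ ^ m :=
    fun m => ENNReal.pow_pos (ENNReal.inv_pos.mpr (by norm_num)) m
  have key : ∀ m : ℕ, ∃ N : ℕ, ∀ k, k ≥ N →
      volume (symmDiff (A k) SA ∩ closedBall (0:EuclideanSpace ℝ (Fin n)) m)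
        ≤ (2:ℝ≥0∞)⁻¹ ^ m ∧
      volume (symmDiff (B k) SB ∩ closedBall (0:EuclideanSpace ℝ (Fin n)) m)
        ≤ (2:ℝ≥0∞)⁻¹ ^ m ∧
      volume (symmDiff (C k) SC ∩ closedBall (0:EuclideanSpace ℝ (Fin n)) m)
        ≤ (2:ℝ≥0∞)⁻¹ ^ m := by
    intro m
    have e1 := ENNReal.tendsto_nhds_zero.mp (hA m) _ (hpos m)
    have e2 := ENNReal.tendsto_nhds_zero.mp (hB m) _ (hpos m)
    have e3 := ENNReal.tendsto_nhds_zero.mp (hC m) _ (hpos m)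
    exact eventually_atTop.mp ((e1.and (e2.and e3)).mono (fun k hk => ⟨hk.1, hk.2.1, hk.2.2⟩))
  choose N hN using key
  obtain ⟨ψ, hψ0, hψsucc⟩ : ∃ ψ : ℕ → ℕ, ψ 0 = N 0 ∧
      ∀ m, ψ (m+1) = max (ψ m + 1) (N (m+1)) :=
    ⟨fun m => Nat.rec (N 0) (fun m ih => max (ih+1) (N (m+1))) m, rfl, fun m => rfl⟩
  have hψmono : StrictMono ψ := strictMono_nat_of_lt_succ (fun m => by
    rw [hψsucc m]
    exact lt_of_lt_of_le (Nat.lt_succ_self _) (le_max_left _ _))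
  have hψN : ∀ m, N m ≤ ψ m := by
    intro m
    cases m with
    | zero => rw [hψ0]
    | succ m => rw [hψsucc m]; exact le_max_right _ _
  have hP := fun m => hN m (ψ m) (hψN m)
  set Dset : ℕ → Set (EuclideanSpace ℝ (Fin n)) := fun m =>
    (symmDiff (A (ψ m)) SA ∩ closedBall (0:EuclideanSpace ℝ (Fin n)) m)
      ∪ (symmDiff (B (ψ m)) SB ∩ closedBall (0:EuclideanSpace ℝ (Fin n)) m)
      ∪ (symmDiff (C (ψ m)) SC ∩ closedBall (0:EuclideanSpace ℝ (Fin n)) m) with hD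
  have hsum : ∑' m, volume (Dset m) ≠ ⊤ := by
    have hle : ∀ m, volume (Dset m) ≤ 3 * (2:ℝ≥0∞)⁻¹ ^ m := by
      intro m
      calc volume (Dset m)
          ≤ volume ((symmDiff (A (ψ m)) SA ∩ closedBall (0:EuclideanSpace ℝ (Fin n)) m)
              ∪ (symmDiff (B (ψ m)) SB ∩ closedBall (0:EuclideanSpace ℝ (Fin n)) m))
            + volume (symmDiff (C (ψ m)) SC ∩ closedBall (0:EuclideanSpace ℝ (Fin n)) m) :=
            measure_union_le _ _
        _ ≤ volume (symmDiff (A (ψ m)) SA ∩ closedBall (0:EuclideanSpace ℝ (Fin n)) m)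
            + volume (symmDiff (B (ψ m)) SB ∩ closedBall (0:EuclideanSpace ℝ (Fin n)) m)
            + volume (symmDiff (C (ψ m)) SC ∩ closedBall (0:EuclideanSpace ℝ (Fin n)) m) :=
            add_le_add_left (measure_union_le _ _) _
        _ ≤ (2:ℝ≥0∞)⁻¹ ^ m + (2:ℝ≥0∞)⁻¹ ^ m + (2:ℝ≥0∞)⁻¹ ^ m := by
            exact add_le_add (add_le_add (hP m).1 (hP m).2.1) (hP m).2.2
        _ = 3 * (2:ℝ≥0∞)⁻¹ ^ m := by ring
    refine ne_top_of_le_ne_top ?_ (ENNReal.tsum_le_tsum hle)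
    rw [ENNReal.tsum_mul_left, ENNReal.tsum_geometric]
    refine ENNReal.mul_ne_top (by norm_num) ?_
    rw [ENNReal.one_sub_inv_two, inv_inv]
    exact ENNReal.ofNat_ne_top
  have hlimsup := measure_limsup_atTop_eq_zero hsum
  refine ⟨ψ, hψmono, ?_⟩
  have hae : ∀ᵐ x ∂(volume : Measure (EuclideanSpace ℝ (Fin n))), x ∉ limsup Dset atTop := by
    rw [ae_iff]
    convert hlimsup using 2
    ext x
    simp
  filter_upwards [hae] with x hx
  have hev : ∀ᶠ m in atTop, x ∉ Dset m := by
    by_contra hcon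
    rw [Filter.not_eventually] at hcon
    exact hx (Filter.mem_limsup_iff_frequently_mem.mpr (hcon.mono fun m hm => not_not.mp hm))
  have hcb : ∀ᶠ m : ℕ in atTop, x ∈ closedBall (0:EuclideanSpace ℝ (Fin n)) m := by
    obtain ⟨m₀, hm₀⟩ := exists_nat_ge ‖x‖
    exact eventually_atTop.mpr ⟨m₀, fun m hm =>
      mem_closedBall_zero_iff.mpr (le_trans hm₀ (by exact_mod_cast hm))⟩
  refine ⟨?_, ?_, ?_⟩
  · filter_upwards [hev, hcb] with m h1 h2
    by_contra hiff
    have hsymm : x ∈ symmDiff (A (ψ m)) SA := by rw [Set.mem_symmDiff]; tauto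
    exact h1 (Set.mem_union_left _ (Set.mem_union_left _ ⟨hsymm, h2⟩))
  · filter_upwards [hev, hcb] with m h1 h2
    by_contra hiff
    have hsymm : x ∈ symmDiff (B (ψ m)) SB := by rw [Set.mem_symmDiff]; tauto
    exact h1 (Set.mem_union_left _ (Set.mem_union_right _ ⟨hsymm, h2⟩))
  · filter_upwards [hev, hcb] with m h1 h2
    by_contra hiff
    have hsymm : x ∈ symmDiff (C (ψ m)) SC := by rw [Set.mem_symmDiff]; tauto
    exact h1 (Set.mem_union_right _ ⟨hsymm, h2⟩)

lemma set_glue_inter {α : Type*} (F E W : Set α) : ((F ∩ W) ∪ (E ∩ Wᶜ)) ∩ W = F ∩ W := by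
  ext x; by_cases hx : x ∈ W <;> simp [hx]

lemma set_glue_inter_compl {α : Type*} (F E W : Set α) :
    ((F ∩ W) ∪ (E ∩ Wᶜ)) ∩ Wᶜ = E ∩ Wᶜ := by
  ext x; by_cases hx : x ∈ W <;> simp [hx]

lemma Ls_union_left (A B C : Set (EuclideanSpace ℝ (Fin n))) :
    Ls n s (A ∪ B) C ≤ Ls n s A C + Ls n s B C := by
  rw [Ls_eq, Ls_eq, Ls_eq]; exact lintegral_union_le _ _ _

lemma nlArea_glue_le (Fi Fj Ei Ej Eik Ejk : Set (EuclideanSpace ℝ (Fin n)))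
    (hi : volume (symmDiff (Fi ∩ (ball (0:EuclideanSpace ℝ (Fin n)) 1)ᶜ)
      (Ei ∩ (ball (0:EuclideanSpace ℝ (Fin n)) 1)ᶜ)) = 0)
    (hj : volume (symmDiff (Fj ∩ (ball (0:EuclideanSpace ℝ (Fin n)) 1)ᶜ)
      (Ej ∩ (ball (0:EuclideanSpace ℝ (Fin n)) 1)ᶜ)) = 0) :
    nlArea n s (ball (0:EuclideanSpace ℝ (Fin n)) 1)
      ((Fi ∩ ball (0:EuclideanSpace ℝ (Fin n)) 1) ∪ (Eik ∩ (ball (0:EuclideanSpace ℝ (Fin n)) 1)ᶜ))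
      ((Fj ∩ ball (0:EuclideanSpace ℝ (Fin n)) 1) ∪ (Ejk ∩ (ball (0:EuclideanSpace ℝ (Fin n)) 1)ᶜ))
    ≤ nlArea n s (ball (0:EuclideanSpace ℝ (Fin n)) 1) Fi Fj
      + ((∫⁻ y in symmDiff Ejk Ej ∩ (ball (0:EuclideanSpace ℝ (Fin n)) 1)ᶜ, Hfun n s y)
        + ∫⁻ y in symmDiff Eik Ei ∩ (ball (0:EuclideanSpace ℝ (Fin n)) 1)ᶜ, Hfun n s y) := by
  set W := ball (0:EuclideanSpace ℝ (Fin n)) 1 with hW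
  unfold nlArea
  rw [set_glue_inter, set_glue_inter, set_glue_inter_compl, set_glue_inter_compl]
  have hsub2 : Ejk ∩ Wᶜ ⊆ (Ej ∩ Wᶜ) ∪ (symmDiff Ejk Ej ∩ Wᶜ) := by
    rintro y ⟨hy1, hy2⟩
    by_cases hyE : y ∈ Ej
    · exact Or.inl ⟨hyE, hy2⟩
    · exact Or.inr ⟨Set.mem_symmDiff.mpr (Or.inl ⟨hy1, hyE⟩), hy2⟩
  have hsub3 : Eik ∩ Wᶜ ⊆ (Ei ∩ Wᶜ) ∪ (symmDiff Eik Ei ∩ Wᶜ) := by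
    rintro y ⟨hy1, hy2⟩
    by_cases hyE : y ∈ Ei
    · exact Or.inl ⟨hyE, hy2⟩
    · exact Or.inr ⟨Set.mem_symmDiff.mpr (Or.inl ⟨hy1, hyE⟩), hy2⟩
  have h2 : Ls n s (Fi ∩ W) (Ejk ∩ Wᶜ)
      ≤ Ls n s (Fi ∩ W) (Fj ∩ Wᶜ) + ∫⁻ y in symmDiff Ejk Ej ∩ Wᶜ, Hfun n s y := by
    calc Ls n s (Fi ∩ W) (Ejk ∩ Wᶜ)
        ≤ Ls n s (Fi ∩ W) ((Ej ∩ Wᶜ) ∪ (symmDiff Ejk Ej ∩ Wᶜ)) := Ls_mono subset_rfl hsub2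
      _ ≤ Ls n s (Fi ∩ W) (Ej ∩ Wᶜ) + Ls n s (Fi ∩ W) (symmDiff Ejk Ej ∩ Wᶜ) :=
          Ls_union_right _ _ _
      _ ≤ Ls n s (Fi ∩ W) (Fj ∩ Wᶜ) + ∫⁻ y in symmDiff Ejk Ej ∩ Wᶜ, Hfun n s y := by
          refine add_le_add (le_of_eq ?_) (Ls_le_int_H inter_subset_right)
          exact Ls_congr (Filter.EventuallyEq.refl _ _)
            (measure_symmDiff_eq_zero_iff.mp hj).symm
  have h3 : Ls n s (Eik ∩ Wᶜ) (Fj ∩ W)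
      ≤ Ls n s (Fi ∩ Wᶜ) (Fj ∩ W) + ∫⁻ y in symmDiff Eik Ei ∩ Wᶜ, Hfun n s y := by
    calc Ls n s (Eik ∩ Wᶜ) (Fj ∩ W)
        ≤ Ls n s ((Ei ∩ Wᶜ) ∪ (symmDiff Eik Ei ∩ Wᶜ)) (Fj ∩ W) := Ls_mono hsub3 subset_rfl
      _ ≤ Ls n s (Ei ∩ Wᶜ) (Fj ∩ W) + Ls n s (symmDiff Eik Ei ∩ Wᶜ) (Fj ∩ W) :=
          Ls_union_left _ _ _
      _ ≤ Ls n s (Fi ∩ Wᶜ) (Fj ∩ W) + ∫⁻ y in symmDiff Eik Ei ∩ Wᶜ, Hfun n s y := by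
          refine add_le_add (le_of_eq ?_) (Ls_le_int_H' inter_subset_right)
          exact Ls_congr (measure_symmDiff_eq_zero_iff.mp hi).symm
            (Filter.EventuallyEq.refl _ _)
  calc Ls n s (Fi ∩ W) (Fj ∩ W) + Ls n s (Fi ∩ W) (Ejk ∩ Wᶜ) + Ls n s (Eik ∩ Wᶜ) (Fj ∩ W)
      ≤ Ls n s (Fi ∩ W) (Fj ∩ W)
        + (Ls n s (Fi ∩ W) (Fj ∩ Wᶜ) + ∫⁻ y in symmDiff Ejk Ej ∩ Wᶜ, Hfun n s y)
        + (Ls n s (Fi ∩ Wᶜ) (Fj ∩ W) + ∫⁻ y in symmDiff Eik Ei ∩ Wᶜ, Hfun n s y) :=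
        add_le_add (add_le_add le_rfl h2) h3
    _ = _ := by ring

lemma ae_iff_inter (R U : Set (EuclideanSpace ℝ (Fin n))) (Uk : ℕ → Set (EuclideanSpace ℝ (Fin n)))
    (h : ∀ᵐ x ∂(volume : Measure (EuclideanSpace ℝ (Fin n))),
      ∀ᶠ k in atTop, (x ∈ Uk k ↔ x ∈ U)) :
    ∀ᵐ x ∂(volume : Measure (EuclideanSpace ℝ (Fin n))),
      ∀ᶠ k in atTop, (x ∈ Uk k ∩ R ↔ x ∈ U ∩ R) := by
  filter_upwards [h] with x hx
  exact hx.mono fun k hk => by simp [Set.mem_inter_iff, hk]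

lemma nlArea_le_liminf
    {U V : Set (EuclideanSpace ℝ (Fin n))} {Uk Vk : ℕ → Set (EuclideanSpace ℝ (Fin n))}
    (hU : MeasurableSet U) (hV : MeasurableSet V)
    (hUk : ∀ k, MeasurableSet (Uk k)) (hVk : ∀ k, MeasurableSet (Vk k))
    (haeU : ∀ᵐ x ∂(volume : Measure (EuclideanSpace ℝ (Fin n))),
      ∀ᶠ k in atTop, (x ∈ Uk k ↔ x ∈ U))
    (haeV : ∀ᵐ x ∂(volume : Measure (EuclideanSpace ℝ (Fin n))),
      ∀ᶠ k in atTop, (x ∈ Vk k ↔ x ∈ V)) :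
    nlArea n s (ball (0:EuclideanSpace ℝ (Fin n)) 1) U V
      ≤ liminf (fun k => nlArea n s (ball (0:EuclideanSpace ℝ (Fin n)) 1) (Uk k) (Vk k)) atTop := by
  have hBm : MeasurableSet (ball (0:EuclideanSpace ℝ (Fin n)) 1) := measurableSet_ball
  have t1 := Ls_le_liminf (n := n) (s := s) (hU.inter hBm) (hV.inter hBm)
    (fun k => (hUk k).inter hBm) (fun k => (hVk k).inter hBm)
    (ae_iff_inter _ _ _ haeU) (ae_iff_inter _ _ _ haeV)
  have t2 := Ls_le_liminf (n := n) (s := s) (hU.inter hBm) (hV.inter hBm.compl)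
    (fun k => (hUk k).inter hBm) (fun k => (hVk k).inter hBm.compl)
    (ae_iff_inter _ _ _ haeU) (ae_iff_inter _ _ _ haeV)
  have t3 := Ls_le_liminf (n := n) (s := s) (hU.inter hBm.compl) (hV.inter hBm)
    (fun k => (hUk k).inter hBm.compl) (fun k => (hVk k).inter hBm)
    (ae_iff_inter _ _ _ haeU) (ae_iff_inter _ _ _ haeV)
  calc nlArea n s (ball (0:EuclideanSpace ℝ (Fin n)) 1) U V
      = Ls n s (U ∩ ball 0 1) (V ∩ ball 0 1) + Ls n s (U ∩ ball 0 1) (V ∩ (ball 0 1)ᶜ)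
        + Ls n s (U ∩ (ball 0 1)ᶜ) (V ∩ ball 0 1) := rfl
    _ ≤ liminf (fun k => Ls n s (Uk k ∩ ball 0 1) (Vk k ∩ ball 0 1)) atTop
        + liminf (fun k => Ls n s (Uk k ∩ ball 0 1) (Vk k ∩ (ball 0 1)ᶜ)) atTop
        + liminf (fun k => Ls n s (Uk k ∩ (ball 0 1)ᶜ) (Vk k ∩ ball 0 1)) atTop :=
        add_le_add (add_le_add t1 t2) t3
    _ ≤ liminf (fun k => Ls n s (Uk k ∩ ball 0 1) (Vk k ∩ ball 0 1)
          + Ls n s (Uk k ∩ ball 0 1) (Vk k ∩ (ball 0 1)ᶜ)) atTop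
        + liminf (fun k => Ls n s (Uk k ∩ (ball 0 1)ᶜ) (Vk k ∩ ball 0 1)) atTop :=
        add_le_add_left (liminf_add_ge _ _) _
    _ ≤ liminf (fun k => Ls n s (Uk k ∩ ball 0 1) (Vk k ∩ ball 0 1)
          + Ls n s (Uk k ∩ ball 0 1) (Vk k ∩ (ball 0 1)ᶜ)
          + Ls n s (Uk k ∩ (ball 0 1)ᶜ) (Vk k ∩ ball 0 1)) atTop := liminf_add_ge _ _
    _ = liminf (fun k => nlArea n s (ball (0:EuclideanSpace ℝ (Fin n)) 1) (Uk k) (Vk k)) atTop :=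
        rfl

lemma Fs_le_liminf (σm0 σ01 σm1 : ℝ)
    {Um U0 U1 : Set (EuclideanSpace ℝ (Fin n))}
    {Ak Bk Ck : ℕ → Set (EuclideanSpace ℝ (Fin n))}
    (hUm : MeasurableSet Um) (hU0 : MeasurableSet U0) (hU1 : MeasurableSet U1)
    (hAk : ∀ k, MeasurableSet (Ak k)) (hBk : ∀ k, MeasurableSet (Bk k))
    (hCk : ∀ k, MeasurableSet (Ck k))
    (haeA : ∀ᵐ x ∂(volume : Measure (EuclideanSpace ℝ (Fin n))),
      ∀ᶠ k in atTop, (x ∈ Ak k ↔ x ∈ Um))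
    (haeB : ∀ᵐ x ∂(volume : Measure (EuclideanSpace ℝ (Fin n))),
      ∀ᶠ k in atTop, (x ∈ Bk k ↔ x ∈ U0))
    (haeC : ∀ᵐ x ∂(volume : Measure (EuclideanSpace ℝ (Fin n))),
      ∀ᶠ k in atTop, (x ∈ Ck k ↔ x ∈ U1)) :
    Fs n s σm0 σ01 σm1 (ball (0:EuclideanSpace ℝ (Fin n)) 1) Um U0 U1
      ≤ liminf (fun k => Fs n s σm0 σ01 σm1 (ball (0:EuclideanSpace ℝ (Fin n)) 1)
          (Ak k) (Bk k) (Ck k)) atTop := by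
  have h1 := nlArea_le_liminf (n := n) (s := s) hUm hU0 hAk hBk haeA haeB
  have h2 := nlArea_le_liminf (n := n) (s := s) hU0 hU1 hBk hCk haeB haeC
  have h3 := nlArea_le_liminf (n := n) (s := s) hUm hU1 hAk hCk haeA haeC
  calc Fs n s σm0 σ01 σm1 (ball (0:EuclideanSpace ℝ (Fin n)) 1) Um U0 U1
      = ENNReal.ofReal σm0 * nlArea n s (ball 0 1) Um U0
        + ENNReal.ofReal σ01 * nlArea n s (ball 0 1) U0 U1
        + ENNReal.ofReal σm1 * nlArea n s (ball 0 1) Um U1 := rfl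
    _ ≤ ENNReal.ofReal σm0 * liminf (fun k => nlArea n s (ball 0 1) (Ak k) (Bk k)) atTop
        + ENNReal.ofReal σ01 * liminf (fun k => nlArea n s (ball 0 1) (Bk k) (Ck k)) atTop
        + ENNReal.ofReal σm1 * liminf (fun k => nlArea n s (ball 0 1) (Ak k) (Ck k)) atTop :=
        add_le_add (add_le_add (mul_le_mul_right h1 _) (mul_le_mul_right h2 _))
          (mul_le_mul_right h3 _)
    _ ≤ liminf (fun k => ENNReal.ofReal σm0 * nlArea n s (ball 0 1) (Ak k) (Bk k)) atTop
        + liminf (fun k => ENNReal.ofReal σ01 * nlArea n s (ball 0 1) (Bk k) (Ck k)) atTop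
        + liminf (fun k => ENNReal.ofReal σm1 * nlArea n s (ball 0 1) (Ak k) (Ck k)) atTop :=
        add_le_add (add_le_add (liminf_const_mul_ge _ _) (liminf_const_mul_ge _ _))
          (liminf_const_mul_ge _ _)
    _ ≤ liminf (fun k => ENNReal.ofReal σm0 * nlArea n s (ball 0 1) (Ak k) (Bk k)
          + ENNReal.ofReal σ01 * nlArea n s (ball 0 1) (Bk k) (Ck k)) atTop
        + liminf (fun k => ENNReal.ofReal σm1 * nlArea n s (ball 0 1) (Ak k) (Ck k)) atTop :=
        add_le_add_left (liminf_add_ge _ _) _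
    _ ≤ liminf (fun k => ENNReal.ofReal σm0 * nlArea n s (ball 0 1) (Ak k) (Bk k)
          + ENNReal.ofReal σ01 * nlArea n s (ball 0 1) (Bk k) (Ck k)
          + ENNReal.ofReal σm1 * nlArea n s (ball 0 1) (Ak k) (Ck k)) atTop :=
        liminf_add_ge _ _
    _ = liminf (fun k => Fs n s σm0 σ01 σm1 (ball (0:EuclideanSpace ℝ (Fin n)) 1)
          (Ak k) (Bk k) (Ck k)) atTop := rfl

set_option maxHeartbeats 2000000 in
lemma glue_admissible (W : Set (EuclideanSpace ℝ (Fin n))) (hWm : MeasurableSet W)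
    (Fm F0 F1 Km K0 K1 : Set (EuclideanSpace ℝ (Fin n)))
    (hF : Admissible n Fm F0 F1) (hK : Admissible n Km K0 K1) :
    Admissible n ((Fm ∩ W) ∪ (Km ∩ Wᶜ)) ((F0 ∩ W) ∪ (K0 ∩ Wᶜ)) ((F1 ∩ W) ∪ (K1 ∩ Wᶜ)) := by
  obtain ⟨am, a0, a1, au, a01, a02, a12⟩ := hF
  obtain ⟨bm, b0, b1, bu, b01, b02, b12⟩ := hK
  refine ⟨(am.inter hWm).union (bm.inter hWm.compl),
    (a0.inter hWm).union (b0.inter hWm.compl),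
    (a1.inter hWm).union (b1.inter hWm.compl), ?_, ?_, ?_, ?_⟩
  · refine measure_mono_null (fun x hx => ?_) (measure_union_null au bu)
    simp only [Set.mem_compl_iff, Set.mem_union, Set.mem_inter_iff] at hx ⊢
    by_cases hxW : x ∈ W
    · left; tauto
    · right; tauto
  · refine measure_mono_null (fun x hx => ?_) (measure_union_null a01 b01)
    simp only [Set.mem_union, Set.mem_inter_iff, Set.mem_compl_iff] at hx ⊢
    tauto
  · refine measure_mono_null (fun x hx => ?_) (measure_union_null a02 b02)
    simp only [Set.mem_union, Set.mem_inter_iff, Set.mem_compl_iff] at hx ⊢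
    tauto
  · refine measure_mono_null (fun x hx => ?_) (measure_union_null a12 b12)
    simp only [Set.mem_union, Set.mem_inter_iff, Set.mem_compl_iff] at hx ⊢
    tauto

end AuxLemmas

open Metric Set in
set_option maxHeartbeats 1000000 in
/-- Compactness of the class of minimizers: an `L¹_loc` limit of minimizers of `F^s` in the
unit ball `B₁` is a minimizer, and the energies converge. -/
theorem minimizers_compact
    (n : ℕ) (hn : 1 ≤ n) (s : ℝ) (hs : s ∈ Set.Ioo (0 : ℝ) 1)
    (σm0 σ01 σm1 : ℝ) (hσm0 : 0 < σm0) (hσ01 : 0 < σ01) (hσm1 : 0 < σm1)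
    (Emk E0k E1k : ℕ → Set (EuclideanSpace ℝ (Fin n)))
    (Em E0 E1 : Set (EuclideanSpace ℝ (Fin n)))
    (hmin : ∀ k, Minimizer n s σm0 σ01 σm1
      (Metric.ball (0 : EuclideanSpace ℝ (Fin n)) 1) (Emk k) (E0k k) (E1k k))
    (hadm : Admissible n Em E0 E1)
    (hconvm : TendstoL1loc n Emk Em) (hconv0 : TendstoL1loc n E0k E0)
    (hconv1 : TendstoL1loc n E1k E1) :
    Minimizer n s σm0 σ01 σm1 (Metric.ball (0 : EuclideanSpace ℝ (Fin n)) 1) Em E0 E1 ∧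
    Tendsto
      (fun k => Fs n s σm0 σ01 σm1
        (Metric.ball (0 : EuclideanSpace ℝ (Fin n)) 1) (Emk k) (E0k k) (E1k k))
      atTop
      (nhds (Fs n s σm0 σ01 σm1 (Metric.ball (0 : EuclideanSpace ℝ (Fin n)) 1) Em E0 E1)) := by
  obtain ⟨hs0, hs1⟩ := hs
  have hmEm : MeasurableSet Em := hadm.1
  have hmE0 : MeasurableSet E0 := hadm.2.1
  have hmE1 : MeasurableSet E1 := hadm.2.2.1
  -- Step 1: lower semicontinuity along the full sequence.
  have hliminf : Fs n s σm0 σ01 σm1 (Metric.ball (0 : EuclideanSpace ℝ (Fin n)) 1) Em E0 E1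
      ≤ liminf (fun k => Fs n s σm0 σ01 σm1
          (Metric.ball (0 : EuclideanSpace ℝ (Fin n)) 1) (Emk k) (E0k k) (E1k k)) atTop := by
    by_contra hcon
    rw [not_le] at hcon
    obtain ⟨c, hc1, hc2⟩ := exists_between hcon
    have hfreq : ∃ᶠ k in atTop,
        Fs n s σm0 σ01 σm1 (Metric.ball (0 : EuclideanSpace ℝ (Fin n)) 1)
          (Emk k) (E0k k) (E1k k) < c :=
      frequently_lt_of_liminf_lt (by isBoundedDefault) hc1
    obtain ⟨φ, hφmono, hφlt⟩ := Filter.extraction_of_frequently_atTop hfreq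
    obtain ⟨ψ, hψmono, hae⟩ := exists_subseq_ae (fun m => Emk (φ m)) (fun m => E0k (φ m))
      (fun m => E1k (φ m)) Em E0 E1
      (fun m => (hconvm _ (isCompact_closedBall _ _)).comp hφmono.tendsto_atTop)
      (fun m => (hconv0 _ (isCompact_closedBall _ _)).comp hφmono.tendsto_atTop)
      (fun m => (hconv1 _ (isCompact_closedBall _ _)).comp hφmono.tendsto_atTop)
    have hFle := Fs_le_liminf (n := n) (s := s) σm0 σ01 σm1 hmEm hmE0 hmE1
      (fun k => (hmin (φ (ψ k))).1.1) (fun k => (hmin (φ (ψ k))).1.2.1)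
      (fun k => (hmin (φ (ψ k))).1.2.2.1)
      (hae.mono fun x hx => hx.1) (hae.mono fun x hx => hx.2.1)
      (hae.mono fun x hx => hx.2.2)
    have hub : liminf (fun m => Fs n s σm0 σ01 σm1
        (Metric.ball (0 : EuclideanSpace ℝ (Fin n)) 1)
        (Emk (φ (ψ m))) (E0k (φ (ψ m))) (E1k (φ (ψ m)))) atTop ≤ c :=
      liminf_le_of_frequently_le
        (Eventually.frequently (Eventually.of_forall fun m => (hφlt (ψ m)).le))
        (by isBoundedDefault)
    exact absurd (hFle.trans hub) (not_le.mpr hc2)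
  -- Step 2: error terms for the gluing construction.
  set errm : ℕ → ℝ≥0∞ := fun k => ∫⁻ y in symmDiff (Emk k) Em
    ∩ (Metric.ball (0 : EuclideanSpace ℝ (Fin n)) 1)ᶜ, Hfun n s y with herrmdef
  set err0 : ℕ → ℝ≥0∞ := fun k => ∫⁻ y in symmDiff (E0k k) E0
    ∩ (Metric.ball (0 : EuclideanSpace ℝ (Fin n)) 1)ᶜ, Hfun n s y with herr0def
  set err1 : ℕ → ℝ≥0∞ := fun k => ∫⁻ y in symmDiff (E1k k) E1
    ∩ (Metric.ball (0 : EuclideanSpace ℝ (Fin n)) 1)ᶜ, Hfun n s y with herr1def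
  have herrm : Tendsto errm atTop (nhds 0) := by
    refine err_tendsto hn ⟨hs0, hs1⟩ _
      (fun k => ((hmin k).1.1.symmDiff hmEm).inter measurableSet_ball.compl)
      (fun k => Set.inter_subset_right) (fun R => ?_)
    refine tendsto_of_tendsto_of_tendsto_of_le_of_le tendsto_const_nhds
      (hconvm (Metric.closedBall 0 R) (isCompact_closedBall _ _))
      (fun k => zero_le) (fun k => measure_mono fun x hx => ⟨hx.1.1, hx.2⟩)
  have herr0 : Tendsto err0 atTop (nhds 0) := by
    refine err_tendsto hn ⟨hs0, hs1⟩ _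
      (fun k => ((hmin k).1.2.1.symmDiff hmE0).inter measurableSet_ball.compl)
      (fun k => Set.inter_subset_right) (fun R => ?_)
    refine tendsto_of_tendsto_of_tendsto_of_le_of_le tendsto_const_nhds
      (hconv0 (Metric.closedBall 0 R) (isCompact_closedBall _ _))
      (fun k => zero_le) (fun k => measure_mono fun x hx => ⟨hx.1.1, hx.2⟩)
  have herr1 : Tendsto err1 atTop (nhds 0) := by
    refine err_tendsto hn ⟨hs0, hs1⟩ _
      (fun k => ((hmin k).1.2.2.1.symmDiff hmE1).inter measurableSet_ball.compl)
      (fun k => Set.inter_subset_right) (fun R => ?_)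
    refine tendsto_of_tendsto_of_tendsto_of_le_of_le tendsto_const_nhds
      (hconv1 (Metric.closedBall 0 R) (isCompact_closedBall _ _))
      (fun k => zero_le) (fun k => measure_mono fun x hx => ⟨hx.1.1, hx.2⟩)
  -- Step 3: upper bound of the limsup by the energy of any competitor.
  have hlimsup : ∀ Fm F0 F1 : Set (EuclideanSpace ℝ (Fin n)), Admissible n Fm F0 F1 →
      volume (symmDiff (Fm ∩ (Metric.ball (0 : EuclideanSpace ℝ (Fin n)) 1)ᶜ)
        (Em ∩ (Metric.ball (0 : EuclideanSpace ℝ (Fin n)) 1)ᶜ)) = 0 →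
      volume (symmDiff (F0 ∩ (Metric.ball (0 : EuclideanSpace ℝ (Fin n)) 1)ᶜ)
        (E0 ∩ (Metric.ball (0 : EuclideanSpace ℝ (Fin n)) 1)ᶜ)) = 0 →
      volume (symmDiff (F1 ∩ (Metric.ball (0 : EuclideanSpace ℝ (Fin n)) 1)ᶜ)
        (E1 ∩ (Metric.ball (0 : EuclideanSpace ℝ (Fin n)) 1)ᶜ)) = 0 →
      limsup (fun k => Fs n s σm0 σ01 σm1
          (Metric.ball (0 : EuclideanSpace ℝ (Fin n)) 1) (Emk k) (E0k k) (E1k k)) atTop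
        ≤ Fs n s σm0 σ01 σm1 (Metric.ball (0 : EuclideanSpace ℝ (Fin n)) 1) Fm F0 F1 := by
    intro Fm F0 F1 hadmF hm h0 h1
    have hcmp : ∀ k, Fs n s σm0 σ01 σm1
        (Metric.ball (0 : EuclideanSpace ℝ (Fin n)) 1) (Emk k) (E0k k) (E1k k)
        ≤ Fs n s σm0 σ01 σm1 (Metric.ball (0 : EuclideanSpace ℝ (Fin n)) 1)
          ((Fm ∩ Metric.ball 0 1) ∪ (Emk k ∩ (Metric.ball 0 1)ᶜ))
          ((F0 ∩ Metric.ball 0 1) ∪ (E0k k ∩ (Metric.ball 0 1)ᶜ))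
          ((F1 ∩ Metric.ball 0 1) ∪ (E1k k ∩ (Metric.ball 0 1)ᶜ)) := by
      intro k
      refine (hmin k).2 _ _ _
        (glue_admissible _ measurableSet_ball Fm F0 F1 (Emk k) (E0k k) (E1k k)
          hadmF (hmin k).1) ?_ ?_ ?_
      · rw [set_glue_inter_compl]; simp [symmDiff_self]
      · rw [set_glue_inter_compl]; simp [symmDiff_self]
      · rw [set_glue_inter_compl]; simp [symmDiff_self]
    have hFsG : ∀ k, Fs n s σm0 σ01 σm1 (Metric.ball (0 : EuclideanSpace ℝ (Fin n)) 1)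
          ((Fm ∩ Metric.ball 0 1) ∪ (Emk k ∩ (Metric.ball 0 1)ᶜ))
          ((F0 ∩ Metric.ball 0 1) ∪ (E0k k ∩ (Metric.ball 0 1)ᶜ))
          ((F1 ∩ Metric.ball 0 1) ∪ (E1k k ∩ (Metric.ball 0 1)ᶜ))
        ≤ Fs n s σm0 σ01 σm1 (Metric.ball (0 : EuclideanSpace ℝ (Fin n)) 1) Fm F0 F1
          + (ENNReal.ofReal σm0 + ENNReal.ofReal σ01 + ENNReal.ofReal σm1)
            * ((errm k + err0 k + err1 k) + (errm k + err0 k + err1 k)) := by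
      intro k
      have g1 := nlArea_glue_le (n := n) (s := s) Fm F0 Em E0 (Emk k) (E0k k) hm h0
      have g2 := nlArea_glue_le (n := n) (s := s) F0 F1 E0 E1 (E0k k) (E1k k) h0 h1
      have g3 := nlArea_glue_le (n := n) (s := s) Fm F1 Em E1 (Emk k) (E1k k) hm h1
      have hWm : errm k ≤ errm k + err0 k + err1 k :=
        le_trans (le_add_right le_rfl) (le_add_right le_rfl)
      have hW0 : err0 k ≤ errm k + err0 k + err1 k :=
        le_trans (le_add_left le_rfl) (le_add_right le_rfl)
      have hW1 : err1 k ≤ errm k + err0 k + err1 k := le_add_left le_rfl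
      have g1' := g1.trans (add_le_add_right (add_le_add hW0 hWm) _)
      have g2' := g2.trans (add_le_add_right (add_le_add hW1 hW0) _)
      have g3' := g3.trans (add_le_add_right (add_le_add hW1 hWm) _)
      unfold Fs
      calc ENNReal.ofReal σm0 * nlArea n s (Metric.ball 0 1)
            ((Fm ∩ Metric.ball 0 1) ∪ (Emk k ∩ (Metric.ball 0 1)ᶜ))
            ((F0 ∩ Metric.ball 0 1) ∪ (E0k k ∩ (Metric.ball 0 1)ᶜ))
          + ENNReal.ofReal σ01 * nlArea n s (Metric.ball 0 1)
            ((F0 ∩ Metric.ball 0 1) ∪ (E0k k ∩ (Metric.ball 0 1)ᶜ))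
            ((F1 ∩ Metric.ball 0 1) ∪ (E1k k ∩ (Metric.ball 0 1)ᶜ))
          + ENNReal.ofReal σm1 * nlArea n s (Metric.ball 0 1)
            ((Fm ∩ Metric.ball 0 1) ∪ (Emk k ∩ (Metric.ball 0 1)ᶜ))
            ((F1 ∩ Metric.ball 0 1) ∪ (E1k k ∩ (Metric.ball 0 1)ᶜ))
          ≤ ENNReal.ofReal σm0 * (nlArea n s (Metric.ball 0 1) Fm F0
              + ((errm k + err0 k + err1 k) + (errm k + err0 k + err1 k)))
            + ENNReal.ofReal σ01 * (nlArea n s (Metric.ball 0 1) F0 F1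
              + ((errm k + err0 k + err1 k) + (errm k + err0 k + err1 k)))
            + ENNReal.ofReal σm1 * (nlArea n s (Metric.ball 0 1) Fm F1
              + ((errm k + err0 k + err1 k) + (errm k + err0 k + err1 k))) :=
            add_le_add (add_le_add (mul_le_mul_right g1' _) (mul_le_mul_right g2' _))
              (mul_le_mul_right g3' _)
        _ = ENNReal.ofReal σm0 * nlArea n s (Metric.ball 0 1) Fm F0
            + ENNReal.ofReal σ01 * nlArea n s (Metric.ball 0 1) F0 F1
            + ENNReal.ofReal σm1 * nlArea n s (Metric.ball 0 1) Fm F1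
            + (ENNReal.ofReal σm0 + ENNReal.ofReal σ01 + ENNReal.ofReal σm1)
              * ((errm k + err0 k + err1 k) + (errm k + err0 k + err1 k)) := by ring
    have hcne : (ENNReal.ofReal σm0 + ENNReal.ofReal σ01 + ENNReal.ofReal σm1) ≠ ⊤ :=
      ENNReal.add_ne_top.mpr ⟨ENNReal.add_ne_top.mpr ⟨ofReal_ne_top, ofReal_ne_top⟩,
        ofReal_ne_top⟩
    have hWten : Tendsto (fun k => errm k + err0 k + err1 k) atTop (nhds 0) := by
      have := (herrm.add herr0).add herr1
      simpa using this
    have hRHS : Tendsto (fun k =>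
        Fs n s σm0 σ01 σm1 (Metric.ball (0 : EuclideanSpace ℝ (Fin n)) 1) Fm F0 F1
          + (ENNReal.ofReal σm0 + ENNReal.ofReal σ01 + ENNReal.ofReal σm1)
            * ((errm k + err0 k + err1 k) + (errm k + err0 k + err1 k))) atTop
        (nhds (Fs n s σm0 σ01 σm1 (Metric.ball (0 : EuclideanSpace ℝ (Fin n)) 1) Fm F0 F1)) := by
      have h2 : Tendsto (fun k => (errm k + err0 k + err1 k) + (errm k + err0 k + err1 k))
          atTop (nhds 0) := by simpa using hWten.add hWten
      have h3 := ENNReal.Tendsto.const_mul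
        (a := ENNReal.ofReal σm0 + ENNReal.ofReal σ01 + ENNReal.ofReal σm1) h2 (Or.inr hcne)
      rw [mul_zero] at h3
      simpa using tendsto_const_nhds.add h3
    calc limsup (fun k => Fs n s σm0 σ01 σm1
          (Metric.ball (0 : EuclideanSpace ℝ (Fin n)) 1) (Emk k) (E0k k) (E1k k)) atTop
        ≤ limsup (fun k =>
            Fs n s σm0 σ01 σm1 (Metric.ball (0 : EuclideanSpace ℝ (Fin n)) 1) Fm F0 F1
              + (ENNReal.ofReal σm0 + ENNReal.ofReal σ01 + ENNReal.ofReal σm1)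
                * ((errm k + err0 k + err1 k) + (errm k + err0 k + err1 k))) atTop :=
          limsup_le_limsup (Eventually.of_forall fun k => (hcmp k).trans (hFsG k))
            (by isBoundedDefault) (by isBoundedDefault)
      _ = Fs n s σm0 σ01 σm1 (Metric.ball (0 : EuclideanSpace ℝ (Fin n)) 1) Fm F0 F1 :=
          hRHS.limsup_eq
  -- Conclusion.
  refine ⟨⟨hadm, fun Fm F0 F1 hadmF h1 h2 h3 =>
    le_trans hliminf (le_trans (liminf_le_limsup (by isBoundedDefault) (by isBoundedDefault))
      (hlimsup Fm F0 F1 hadmF h1 h2 h3))⟩, ?_⟩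
  refine tendsto_of_le_liminf_of_limsup_le hliminf ?_
  refine hlimsup Em E0 E1 hadm ?_ ?_ ?_ <;> simp [symmDiff_self]
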